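/- (Polarisation-type computation of the main theorem on equations for the generalised Humbert locus.) Let g, k be integers with 0 < k and 2k ≤ g, and let d₁, …, d_k be positive integers with d_i dividing d_{i+1} for i = 1, …, k−1. Let Z = (z_{ij}) ∈ ℍ_g satisfy z_{ij} = d_i · z_{(g+1−i) j} for all 1 ≤ i, j ≤ k, and z_{ij} = 0 for all k+1 ≤ i ≤ g−k and 1 ≤ j ≤ k. Let Z_M = (z_{ij})_{1 ≤ i,j ≤ k} be the upper-left k×k block of Z, and let P be the real g×k matrix with entries P_{i,i} = 1 and P_{g+1−i, i} = 1/d_i for 1 ≤ i ≤ k and all other entries 0. Then Z_M ∈ ℍ_k (i.e. Z_M is symmetric and Im Z_M is positive definite), and Pᵀ (Im Z)⁻¹ P · (Im Z_M) = I_k; equivalently, Pᵀ (Im Z)⁻¹ P = (Im Z_M)⁻¹. (This says the polarisation of ℂ^g/Λ_Z given by (Im Z)⁻¹ restricts under the embedding with matrix P to a polarisation of type (d₁, …, d_k).) -/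

import Mathlib

/-- Polarisation-type computation of the main theorem on equations for the
generalised Humbert locus: for `Z ∈ ℍ_g` satisfying the Humbert equations,
the upper-left `k×k` block `Z_M` lies in `ℍ_k`, and with `P` the real `g×k`
matrix of the embedding (`P_{i,i} = 1`, `P_{g+1-i,i} = 1/d_i`, other entries
`0`) one has `Pᵀ (Im Z)⁻¹ P · (Im Z_M) = I_k`.
(Indices here are 0-based: `i`-th 1-based becomes `i-1`.) -/
theorem humbert_equations_polarisation_type
    (g k : ℕ) (hk : 0 < k) (hkg : 2 * k ≤ g)
    (d : ℕ → ℕ) (hd : ∀ i < k, 0 < d i)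
    (hdvd : ∀ i, i + 1 < k → d i ∣ d (i + 1))
    (Z : Matrix (Fin g) (Fin g) ℂ)
    (hZsymm : Z.IsSymm) (hZpos : (Z.map Complex.im).PosDef)
    (heq1 : ∀ i j : Fin g, (i : ℕ) < k → (j : ℕ) < k →
      Z i j = (d i : ℂ) * Z ⟨g - 1 - (i : ℕ), by omega⟩ j)
    (heq2 : ∀ i j : Fin g, k ≤ (i : ℕ) → (i : ℕ) < g - k → (j : ℕ) < k →
      Z i j = 0) :
    let ZM : Matrix (Fin k) (Fin k) ℂ :=
      Matrix.of fun i j : Fin k => Z (Fin.castLE (by omega) i) (Fin.castLE (by omega) j)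
    let P : Matrix (Fin g) (Fin k) ℝ :=
      Matrix.of fun r : Fin g => fun j : Fin k =>
        if (r : ℕ) = (j : ℕ) then 1
        else if (r : ℕ) = g - 1 - (j : ℕ) then (1 : ℝ) / (d j : ℝ)
        else 0
    ZM.IsSymm ∧ (ZM.map Complex.im).PosDef ∧
      P.transpose * (Z.map Complex.im)⁻¹ * P * (ZM.map Complex.im) = 1 := by
  intro ZM P
  have hg : 0 < g := by omega
  set Y : Matrix (Fin g) (Fin g) ℝ := Z.map Complex.im with hY
  set YM : Matrix (Fin k) (Fin k) ℝ := ZM.map Complex.im with hYM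
  have hYMent : ∀ i j : Fin k,
      YM i j = Y (Fin.castLE (by omega) i) (Fin.castLE (by omega) j) := fun i j => rfl
  -- symmetry of ZM
  have hZM : ZM.IsSymm := by
    ext i j
    have := congrFun (congrFun hZsymm (Fin.castLE (by omega) i)) (Fin.castLE (by omega) j)
    simpa [ZM, Matrix.transpose_apply] using this
  -- the inclusion matrix
  set S : Matrix (Fin g) (Fin k) ℝ :=
    Matrix.of (fun r : Fin g => fun j : Fin k => if (r : ℕ) = (j : ℕ) then 1 else 0) with hS
  have hYS : ∀ (i : Fin g) (j : Fin k),
      (Y * S) i j = Y i (Fin.castLE (by omega) j) := by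
    intro i j
    simp only [Matrix.mul_apply, S, Matrix.of_apply]
    rw [Finset.sum_eq_single (Fin.castLE (by omega : k ≤ g) j)]
    · simp
    · intro b _ hb
      have : (b : ℕ) ≠ (j : ℕ) := fun h => hb (Fin.ext (by simpa using h))
      simp [this]
    · simp
  have hSYS : S.transpose * (Y * S) = YM := by
    ext i j
    simp only [Matrix.mul_apply, Matrix.transpose_apply]
    rw [Finset.sum_eq_single (Fin.castLE (by omega : k ≤ g) i)]
    · have := hYS (Fin.castLE (by omega : k ≤ g) i) j
      rw [Matrix.mul_apply] at this
      rw [this, hYMent]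
      simp [S]
    · intro b _ hb
      have : (b : ℕ) ≠ (i : ℕ) := fun h => hb (Fin.ext (by simpa using h))
      simp [S, this]
    · simp
  refine ⟨hZM, ?_, ?_⟩
  · -- positive definiteness of YM
    refine Matrix.PosDef.of_dotProduct_mulVec_pos ?_ ?_
    · have hsymm : YM.IsSymm := by
        ext i j
        simp only [hYMent, Matrix.transpose_apply, Y, Matrix.map_apply]
        have := congrFun (congrFun hZsymm (Fin.castLE (by omega) i)) (Fin.castLE (by omega) j)
        simp only [Matrix.transpose_apply] at this
        rw [this]
      simpa [Matrix.IsHermitian, Matrix.IsSymm] using hsymm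
    · intro x hx
      set x' : Fin g → ℝ := fun r => if h : (r : ℕ) < k then x ⟨r, h⟩ else 0 with hx'def
      have hx'ne : x' ≠ 0 := by
        intro h0
        apply hx
        funext i
        have := congrFun h0 (Fin.castLE (by omega) i)
        simpa [x', i.isLt] using this
      have hSx : S.mulVec x = x' := by
        funext r
        simp only [Matrix.mulVec, dotProduct, S, Matrix.of_apply, x']
        by_cases h : (r : ℕ) < k
        · rw [Finset.sum_eq_single (⟨(r : ℕ), h⟩ : Fin k)]
          · simp [h]
          · intro b _ hb
            have : (r : ℕ) ≠ (b : ℕ) := fun hc => hb (Fin.ext (by simpa using hc.symm))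
            simp [this]
          · simp
        · rw [dif_neg h, Finset.sum_eq_zero]
          intro b _
          have : (r : ℕ) ≠ (b : ℕ) := by have := b.isLt; omega
          simp [this]
      have key := hZpos.dotProduct_mulVec_pos hx'ne
      have hcalc : dotProduct (star x') (Y.mulVec x')
          = dotProduct (star x) (YM.mulVec x) := by
        rw [star_trivial, star_trivial, ← hSx, Matrix.mulVec_mulVec,
          ← Matrix.transpose_transpose S, Matrix.mulVec_transpose,
          Matrix.transpose_transpose, ← Matrix.dotProduct_mulVec,
          Matrix.mulVec_mulVec, ← Matrix.mul_assoc, ← hSYS, Matrix.mul_assoc]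
      rw [hcalc] at key
      exact key
  · -- the main identity
    -- imaginary-part versions of the equations
    have hYeq1 : ∀ i j : Fin g, (i : ℕ) < k → (j : ℕ) < k →
        Y i j = (d i : ℝ) * Y ⟨g - 1 - (i : ℕ), by omega⟩ j := by
      intro i j hi hj
      have := heq1 i j hi hj
      have h2 : (Z i j).im = ((d (i:ℕ) : ℂ) * Z ⟨g - 1 - (i : ℕ), by omega⟩ j).im := by
        rw [← this]
      simpa [Y, Complex.mul_im] using h2
    have hYeq2 : ∀ i j : Fin g, k ≤ (i : ℕ) → (i : ℕ) < g - k → (j : ℕ) < k →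
        Y i j = 0 := by
      intro i j h1 h2 h3
      have := heq2 i j h1 h2 h3
      simp only [Y, Matrix.map_apply, this, Complex.zero_im]
    -- Step 1 : Y * S = P * YM
    have hstep1 : Y * S = P * YM := by
      ext i j
      rw [hYS i j]
      simp only [Matrix.mul_apply, P, Matrix.of_apply]
      rcases lt_or_ge (i : ℕ) k with hik | hik
      · -- top block
        rw [Finset.sum_eq_single (⟨(i : ℕ), hik⟩ : Fin k)]
        · have : YM ⟨(i:ℕ), hik⟩ j = Y i (Fin.castLE (by omega) j) := rfl
          simp [this]
        · intro b _ hb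
          have hne : (i : ℕ) ≠ (b : ℕ) := fun h => hb (Fin.ext (by simpa using h.symm))
          have hne2 : (i : ℕ) ≠ g - 1 - (b : ℕ) := by
            have := b.isLt; omega
          simp [hne, hne2]
        · simp
      · rcases lt_or_ge (i : ℕ) (g - k) with him | him
        · -- middle block : both sides zero
          rw [hYeq2 i (Fin.castLE (by omega) j) hik him (by simpa using j.isLt)]
          rw [Finset.sum_eq_zero]
          intro b _
          have hne : (i : ℕ) ≠ (b : ℕ) := by have := b.isLt; omega
          have hne2 : (i : ℕ) ≠ g - 1 - (b : ℕ) := by omega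
          simp [hne, hne2]
        · -- bottom block
          have hlt : g - 1 - (i : ℕ) < k := by have := i.isLt; omega
          set l : Fin k := ⟨g - 1 - (i : ℕ), hlt⟩ with hl
          rw [Finset.sum_eq_single l]
          · have hil : (i : ℕ) ≠ (l : ℕ) := by simp only [hl]; omega
            have hil2 : (i : ℕ) = g - 1 - (l : ℕ)  := by
              simp only [hl]; have := i.isLt; omega
            have hdpos : 0 < d (l : ℕ) := hd _ hlt
            have hrel := hYeq1 (Fin.castLE (by omega : k ≤ g) l) (Fin.castLE (by omega) j)
              (by simpa using hlt) (by simpa using j.isLt)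
            have hic : (⟨g - 1 - ((Fin.castLE (by omega : k ≤ g) l : Fin g) : ℕ), by omega⟩ : Fin g) = i := by
              apply Fin.ext
              simp only [Fin.coe_castLE, hl]
              have := i.isLt; omega
            rw [hic] at hrel
            have : YM l j = Y (Fin.castLE (by omega) l) (Fin.castLE (by omega) j) := hYMent l j
            rw [if_neg hil, if_pos hil2, this, hrel]
            have : (d (l : ℕ) : ℝ) ≠ 0 := Nat.cast_ne_zero.mpr hdpos.ne'
            field_simp
            rfl
          · intro b _ hb
            have hne : (i : ℕ) ≠ (b : ℕ) := by have := b.isLt; omega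
            have hne2 : (i : ℕ) ≠ g - 1 - (b : ℕ) := by
              intro h
              apply hb
              apply Fin.ext
              simp only [hl]
              have hb1 := b.isLt
              omega
            simp [hne, hne2]
          · simp
    -- Step 2 : Pᵀ * S = 1
    have hstep2 : P.transpose * S = 1 := by
      ext i j
      simp only [Matrix.mul_apply, Matrix.transpose_apply, P, S, Matrix.of_apply]
      rw [Finset.sum_eq_single (Fin.castLE (by omega : k ≤ g) j)]
      · have h2 : ((Fin.castLE (by omega : k ≤ g) j : Fin g) : ℕ) ≠ g - 1 - (i : ℕ) := by
          have := j.isLt; have := i.isLt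
          simp only [Fin.coe_castLE]; omega
        by_cases h : j = i
        · simp [h, Matrix.one_apply]
        · have hja : (j : ℕ) ≠ (i : ℕ) := fun hc => h (Fin.ext hc)
          have hjb : (j : ℕ) ≠ g - 1 - (i : ℕ) := by
            have := j.isLt; have := i.isLt; omega
          simp [hja, hjb, Matrix.one_apply, Ne.symm h]
      · intro b _ hb
        have : (b : ℕ) ≠ (j : ℕ) := fun h => hb (Fin.ext (by simpa using h))
        simp [this]
      · simp
    -- assemble
    have hYunit : IsUnit Y.det := by
      simpa using hZpos.det_pos.ne'.isUnit
    calc P.transpose * Y⁻¹ * P * YM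
        = P.transpose * (Y⁻¹ * (P * YM)) := by
          rw [Matrix.mul_assoc, Matrix.mul_assoc]
      _ = P.transpose * (Y⁻¹ * (Y * S)) := by rw [hstep1]
      _ = P.transpose * S := by
          rw [← Matrix.mul_assoc Y⁻¹ Y S, Matrix.nonsing_inv_mul Y hYunit, Matrix.one_mul]
      _ = 1 := hstep2
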